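/- Let f : ℝ^p → ℝ be twice continuously differentiable with m·I ⪯ ∇²f(θ) ⪯ M·I for all θ (0 < m ≤ M), and fix κ₁ ∈ (0, 1/2), κ₂ ∈ (0, 1), η > 0, ζ > 0. Let θ ∈ ℝ^p, and suppose g(θ) ∈ ℝ^p and H(θ) ∈ ℝ^{p×p} satisfy ‖g(θ)‖₂ ≥ η/2 and ‖H(θ) − ∇²f(θ)‖₂ ≤ γ_h ≤ m/2. Set Δθ_nt = −H(θ)⁻¹g(θ) and λ̃(θ)² = g(θ)ᵀH(θ)⁻¹g(θ). Let f̃ : ℝ^p → ℝ satisfy |f̃(φ) − f(φ)| ≤ ζ/4 at φ = θ and φ = θ + α·Δθ_nt. Suppose α satisfies α ≥ κ₂·(m/M)·(1/2 − κ₁) together with the linesearch exit condition f̃(θ + α·Δθ_nt) ≤ f̃(θ) + κ₁·α·g(θ)ᵀΔθ_nt + ζ. Define γ' = κ₁·κ₂·(m/M)·(1/2 − κ₁)·η²/(4(M + γ_h)) and suppose ζ ≤ γ'/3. Then f(θ + α·Δθ_nt) ≤ f(θ) − γ'/2. -/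

import Mathlib

open scoped RealInnerProductSpace

/-- The Hessian of `f`, as the Fréchet derivative of the gradient. -/
noncomputable def hessianOf {p : ℕ} (f : EuclideanSpace ℝ (Fin p) → ℝ)
    (θ : EuclideanSpace ℝ (Fin p)) :
    EuclideanSpace ℝ (Fin p) →L[ℝ] EuclideanSpace ℝ (Fin p) :=
  fderiv ℝ (gradient f) θ

section Aux

variable {p : ℕ}
local notation "E" => EuclideanSpace ℝ (Fin p)

/-- The inverse of `toDual`, as a continuous linear map. -/
noncomputable def dualIso (p : ℕ) : StrongDual ℝ (EuclideanSpace ℝ (Fin p)) →L[ℝ]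
    EuclideanSpace ℝ (Fin p) :=
  LinearMap.toContinuousLinearMap
    { toFun := fun φ => (InnerProductSpace.toDual ℝ (EuclideanSpace ℝ (Fin p))).symm φ
      map_add' := fun φ ψ => by simp
      map_smul' := fun c φ => by
        simp [LinearIsometryEquiv.map_smulₛₗ, starRingEnd_apply, star_trivial] }

lemma hess_eq (f : E → ℝ) (hf : ContDiff ℝ 2 f) (θ : E) :
    hessianOf f θ = (dualIso p).comp (fderiv ℝ (fderiv ℝ f) θ) := by
  have hgrad : gradient f = (dualIso p) ∘ (fderiv ℝ f) := rfl
  have hd : DifferentiableAt ℝ (fderiv ℝ f) θ :=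
    (hf.fderiv_right (m := 1) (le_refl 2)).differentiable one_ne_zero |>.differentiableAt
  rw [hessianOf, hgrad, fderiv_comp θ (dualIso p).differentiableAt hd,
    (dualIso p).fderiv]

/-- The Hessian of a `C²` function is self-adjoint. -/
lemma hess_symm (f : E → ℝ) (hf : ContDiff ℝ 2 f) (θ v w : E) :
    ⟪hessianOf f θ v, w⟫ = ⟪hessianOf f θ w, v⟫ := by
  have hsnd : IsSymmSndFDerivAt ℝ f θ := hf.contDiffAt.isSymmSndFDerivAt (by simp [minSmoothness_of_isRCLikeNormedField])
  have h1 : ∀ v w : E, ⟪hessianOf f θ v, w⟫ = fderiv ℝ (fderiv ℝ f) θ v w := by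
    intro v w
    rw [hess_eq f hf θ]
    exact InnerProductSpace.toDual_symm_apply
  rw [h1, h1, hsnd.eq]

/-- Generalized Cauchy–Schwarz for a positive self-adjoint operator. -/
lemma genCS (B : E →L[ℝ] E) (hsym : ∀ x y : E, ⟪B x, y⟫ = ⟪B y, x⟫)
    (hpos : ∀ x : E, 0 ≤ ⟪B x, x⟫) (x y : E) :
    ⟪B x, y⟫ ^ 2 ≤ ⟪B x, x⟫ * ⟪B y, y⟫ := by
  have key : ∀ t : ℝ, 0 ≤ ⟪B y, y⟫ * (t * t) + (2 * ⟪B x, y⟫) * t + ⟪B x, x⟫ := by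
    intro t
    have h := hpos (x + t • y)
    have hB : B (x + t • y) = B x + t • B y := by rw [map_add, map_smul]
    rw [hB, inner_add_left, inner_add_right, inner_add_right, real_inner_smul_left,
      real_inner_smul_left, real_inner_smul_right, real_inner_smul_right, hsym y x] at h
    nlinarith [h]
  have hd := discrim_le_zero key
  rw [discrim] at hd
  nlinarith [hd]

lemma normB_le (B : E →L[ℝ] E) (hsym : ∀ x y : E, ⟪B x, y⟫ = ⟪B y, x⟫)
    (hpos : ∀ x : E, 0 ≤ ⟪B x, x⟫) (L : ℝ)
    (hub : ∀ x : E, ⟪B x, x⟫ ≤ L * ‖x‖ ^ 2) (x : E) :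
    ‖B x‖ ^ 2 ≤ L * ⟪B x, x⟫ := by
  rcases eq_or_ne (B x) 0 with h | h
  · rw [h]
    simp only [norm_zero, inner_zero_left, mul_zero]
    norm_num
  · have h1 := genCS B hsym hpos x (B x)
    have h2 : ⟪B (B x), B x⟫ ≤ L * ‖B x‖ ^ 2 := hub (B x)
    have h3 : ⟪B x, B x⟫ = ‖B x‖ ^ 2 := real_inner_self_eq_norm_sq (B x)
    have h4 : 0 < ‖B x‖ ^ 2 := by have := norm_pos_iff.mpr h; positivity
    have h5 : 0 ≤ ⟪B x, x⟫ := hpos x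
    nlinarith [h1, h2, h4, h5]

lemma opSq_le (A : E →L[ℝ] E) (m M : ℝ)
    (hsym : ∀ x y : E, ⟪A x, y⟫ = ⟪A y, x⟫)
    (hlo : ∀ x : E, m * ‖x‖ ^ 2 ≤ ⟪A x, x⟫) (hhi : ∀ x : E, ⟪A x, x⟫ ≤ M * ‖x‖ ^ 2)
    (u : E) : ‖A u‖ ^ 2 ≤ (m + M) * ⟪A u, u⟫ - m * M * ‖u‖ ^ 2 := by
  set B : E →L[ℝ] E := A - m • ContinuousLinearMap.id ℝ (EuclideanSpace ℝ (Fin p)) with hBdef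
  have hBapp : ∀ x : E, B x = A x - m • x := by
    intro x; simp [hBdef]
  have hBin : ∀ x y : E, ⟪B x, y⟫ = ⟪A x, y⟫ - m * ⟪x, y⟫ := by
    intro x y; rw [hBapp, inner_sub_left, real_inner_smul_left]
  have hsymB : ∀ x y : E, ⟪B x, y⟫ = ⟪B y, x⟫ := by
    intro x y; rw [hBin, hBin, hsym, real_inner_comm x y]
  have hposB : ∀ x : E, 0 ≤ ⟪B x, x⟫ := by
    intro x; rw [hBin, real_inner_self_eq_norm_sq]; linarith [hlo x]
  have hubB : ∀ x : E, ⟪B x, x⟫ ≤ (M - m) * ‖x‖ ^ 2 := by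
    intro x; rw [hBin, real_inner_self_eq_norm_sq]; linarith [hhi x]
  have h := normB_le B hsymB hposB (M - m) hubB u
  have hexp : ‖B u‖ ^ 2 = ‖A u‖ ^ 2 - 2 * (m * ⟪A u, u⟫) + m ^ 2 * ‖u‖ ^ 2 := by
    rw [hBapp, norm_sub_sq_real, real_inner_smul_right, norm_smul]
    simp [mul_pow]
  rw [hexp, hBin, real_inner_self_eq_norm_sq] at h
  linarith [h]

set_option maxHeartbeats 1000000 in
/-- Key inequality on a unit vector: `‖H u‖² ≤ (M + γh) ⟪H u, u⟫`. -/
lemma key_ineq (A H : E →L[ℝ] E) (m M γh : ℝ) (hm : 0 < m) (hmM : m ≤ M)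
    (hγm : γh ≤ m / 2)
    (hsym : ∀ x y : E, ⟪A x, y⟫ = ⟪A y, x⟫)
    (hlo : ∀ x : E, m * ‖x‖ ^ 2 ≤ ⟪A x, x⟫) (hhi : ∀ x : E, ⟪A x, x⟫ ≤ M * ‖x‖ ^ 2)
    (hE : ‖H - A‖ ≤ γh) (u : E) (hu : ‖u‖ = 1) :
    ‖H u‖ ^ 2 ≤ (M + γh) * ⟪H u, u⟫ := by
  have hγ0 : 0 ≤ γh := le_trans (norm_nonneg _) hE
  set a : E := A u with ha
  set e : E := H u - A u with he
  set q : ℝ := ⟪a, u⟫ with hq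
  set r : ℝ := ⟪e, u⟫ with hr
  set s : ℝ := ‖a - q • u‖ with hs
  set t : ℝ := ‖e - r • u‖ with ht
  have hu2 : ‖u‖ ^ 2 = 1 := by rw [hu]; norm_num
  have hq1 : m ≤ q := by have := hlo u; rwa [hu2, mul_one] at this
  have hq2 : q ≤ M := by have := hhi u; rwa [hu2, mul_one] at this
  have haq : ‖a‖ ^ 2 ≤ (m + M) * q - m * M := by
    have := opSq_le A m M hsym hlo hhi u; rwa [hu2, mul_one] at this
  have henorm : ‖e‖ ≤ γh := by
    have h1 : ‖(H - A) u‖ ≤ ‖H - A‖ * ‖u‖ := (H - A).le_opNorm u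
    rw [hu, mul_one] at h1
    have h2 : (H - A) u = e := by simp [he]
    rw [h2] at h1; linarith
  have hrabs : |r| ≤ γh := by
    have := abs_real_inner_le_norm e u
    rw [hu, mul_one] at this
    linarith [henorm]
  have hs2 : s ^ 2 = ‖a‖ ^ 2 - q ^ 2 := by
    rw [hs, norm_sub_sq_real, real_inner_smul_right, norm_smul]
    simp [hu, ← hq]
    ring
  have ht2 : t ^ 2 = ‖e‖ ^ 2 - r ^ 2 := by
    rw [ht, norm_sub_sq_real, real_inner_smul_right, norm_smul]
    simp [hu, ← hr]
    ring
  have hcross : ⟪a, e⟫ ≤ q * r + s * t := by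
    have h1 : ⟪a - q • u, e - r • u⟫ ≤ s * t := real_inner_le_norm _ _
    have e1 : ⟪a, e - r • u⟫ = ⟪a, e⟫ - r * q := by
      rw [inner_sub_right, real_inner_smul_right, ← hq]
    have e2 : ⟪q • u, e - r • u⟫ = q * r - q * r * ‖u‖ ^ 2 := by
      rw [inner_sub_right, real_inner_smul_left, real_inner_smul_left,
        real_inner_smul_right, real_inner_self_eq_norm_sq, hr, real_inner_comm u e]
      ring
    have h2 : ⟪a - q • u, e - r • u⟫ = ⟪a, e⟫ - q * r := by
      rw [inner_sub_left, e1, e2, hu2]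
      ring
    linarith
  have hHu : H u = a + e := by simp [he, ha]
  have hnormsq : ‖H u‖ ^ 2 = ‖a‖ ^ 2 + 2 * ⟪a, e⟫ + ‖e‖ ^ 2 := by
    rw [hHu, norm_add_sq_real]
  have hinner : ⟪H u, u⟫ = q + r := by rw [hHu, inner_add_left]
  have hs0 : 0 ≤ s := norm_nonneg _
  have ht0 : 0 ≤ t := norm_nonneg _
  have hsb : s ^ 2 ≤ (M - q) * (q - m) := by linarith [hs2, haq]
  have htb : t ^ 2 ≤ (γh - r) * (γh + r) := by
    have : ‖e‖ ^ 2 ≤ γh ^ 2 := by nlinarith [henorm, norm_nonneg e]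
    linarith [ht2, this]
  have hr1 : -γh ≤ r := neg_le_of_abs_le hrabs
  have hr2 : r ≤ γh := le_of_abs_le hrabs
  have hP : 0 ≤ (M - q) * (γh + r) := mul_nonneg (by linarith) (by linarith)
  have hQ : 0 ≤ (γh - r) * (q - m) := mul_nonneg (by linarith) (by linarith)
  have hst : 2 * (s * t) ≤ (M - q) * (γh + r) + (γh - r) * (q - m) := by
    obtain ⟨P, hPdef⟩ : ∃ x : ℝ, x = (M - q) * (γh + r) := ⟨_, rfl⟩
    obtain ⟨Q, hQdef⟩ : ∃ x : ℝ, x = (γh - r) * (q - m) := ⟨_, rfl⟩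
    obtain ⟨w, hwdef⟩ : ∃ x : ℝ, x = s * t := ⟨_, rfl⟩
    rw [← hPdef, ← hQdef, ← hwdef]
    have hP0 : 0 ≤ P := hPdef ▸ hP
    have hQ0 : 0 ≤ Q := hQdef ▸ hQ
    have hw0 : 0 ≤ w := hwdef ▸ mul_nonneg hs0 ht0
    have hPQ : w ^ 2 ≤ P * Q := by
      rw [hwdef, hPdef, hQdef]
      calc (s * t) ^ 2 = s ^ 2 * t ^ 2 := by ring
        _ ≤ ((M - q) * (q - m)) * ((γh - r) * (γh + r)) :=
            mul_le_mul hsb htb (by positivity)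
              (mul_nonneg (by linarith) (by linarith))
        _ = ((M - q) * (γh + r)) * ((γh - r) * (q - m)) := by ring
    have h2 : (2 * w) ^ 2 ≤ (P + Q) ^ 2 := by nlinarith [hPQ, sq_nonneg (P - Q)]
    exact le_of_pow_le_pow_left₀ two_ne_zero (add_nonneg hP0 hQ0) h2
  have hsum : s ^ 2 + t ^ 2 + 2 * (s * t)
      ≤ (M - q + (γh - r)) * (q - m + (γh + r)) := by
    linarith [hsb, htb, hst]
  have hfin : (q + r) ^ 2 + (M - q + (γh - r)) * (q - m + (γh + r))
      ≤ (M + γh) * (q + r) := by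
    linarith [mul_nonneg (show (0:ℝ) ≤ M + γh - (q + r) by linarith)
      (show (0:ℝ) ≤ m - γh by linarith)]
  rw [hnormsq, hinner]
  linarith [hcross, hsum, hfin, hs2, ht2]

/-- Key inequality for arbitrary vectors, by scaling. -/
lemma key_ineq_all (A H : E →L[ℝ] E) (m M γh : ℝ) (hm : 0 < m) (hmM : m ≤ M)
    (hγm : γh ≤ m / 2)
    (hsym : ∀ x y : E, ⟪A x, y⟫ = ⟪A y, x⟫)
    (hlo : ∀ x : E, m * ‖x‖ ^ 2 ≤ ⟪A x, x⟫) (hhi : ∀ x : E, ⟪A x, x⟫ ≤ M * ‖x‖ ^ 2)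
    (hE : ‖H - A‖ ≤ γh) (u : E) :
    ‖H u‖ ^ 2 ≤ (M + γh) * ⟪H u, u⟫ := by
  rcases eq_or_ne u 0 with rfl | hu0
  · simp
  · have hn : (0:ℝ) < ‖u‖ := norm_pos_iff.mpr hu0
    have hne : ‖u‖ ≠ 0 := hn.ne'
    have hw : ‖(‖u‖⁻¹ • u : E)‖ = 1 := by
      rw [norm_smul, norm_inv, norm_norm, inv_mul_cancel₀ hne]
    have h3 := key_ineq A H m M γh hm hmM hγm hsym hlo hhi hE _ hw
    have e1 : H (‖u‖⁻¹ • u) = ‖u‖⁻¹ • H u := map_smul H _ u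
    have e2 : ‖H (‖u‖⁻¹ • u)‖ ^ 2 = ‖u‖⁻¹ ^ 2 * ‖H u‖ ^ 2 := by
      rw [e1, norm_smul, norm_inv, norm_norm]
      ring
    have e3 : ⟪H (‖u‖⁻¹ • u), ‖u‖⁻¹ • u⟫ = ‖u‖⁻¹ ^ 2 * ⟪H u, u⟫ := by
      rw [e1, real_inner_smul_left, real_inner_smul_right]
      ring
    rw [e2, e3] at h3
    have h4 := mul_le_mul_of_nonneg_left h3 (le_of_lt (show (0:ℝ) < ‖u‖ ^ 2 by positivity))
    have hc : ‖u‖ ^ 2 * (‖u‖⁻¹ ^ 2) = 1 := by field_simp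
    calc ‖H u‖ ^ 2 = ‖u‖ ^ 2 * (‖u‖⁻¹ ^ 2 * ‖H u‖ ^ 2) := by rw [← mul_assoc, hc, one_mul]
      _ ≤ ‖u‖ ^ 2 * ((M + γh) * (‖u‖⁻¹ ^ 2 * ⟪H u, u⟫)) := h4
      _ = (M + γh) * (‖u‖ ^ 2 * ‖u‖⁻¹ ^ 2 * ⟪H u, u⟫) := by ring
      _ = (M + γh) * ⟪H u, u⟫ := by rw [hc, one_mul]

/-- A coercive operator on a finite-dimensional space is invertible. -/
lemma inverse_section (H : E →L[ℝ] E) (c : ℝ) (hc : 0 < c)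
    (hpos : ∀ v : E, c * ‖v‖ ^ 2 ≤ ⟪H v, v⟫) (g : E) :
    H (H.inverse g) = g := by
  have hinj : Function.Injective H := by
    intro x y hxy
    have h0 : H (x - y) = 0 := by rw [map_sub, hxy, sub_self]
    have h1 := hpos (x - y)
    rw [h0, inner_zero_left] at h1
    have h2 : ‖x - y‖ ^ 2 ≤ 0 := by
      by_contra hcon
      push_neg at hcon
      nlinarith [h1, hc, hcon]
    have : x - y = 0 := by
      have := sq_nonneg ‖x - y‖
      have hz : ‖x - y‖ ^ 2 = 0 := le_antisymm h2 this
      simpa using pow_eq_zero_iff (n := 2) (by norm_num) |>.mp hz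
    linear_combination (norm := abel) this
  have hinjL : Function.Injective (H : E →ₗ[ℝ] E) := hinj
  have hsurj : Function.Surjective (H : E →ₗ[ℝ] E) :=
    (LinearMap.injective_iff_surjective).mp hinjL
  let eL : E ≃ₗ[ℝ] E := LinearEquiv.ofBijective (H : E →ₗ[ℝ] E) ⟨hinjL, hsurj⟩
  let eC : E ≃L[ℝ] E := eL.toContinuousLinearEquiv
  have hco : (eC : E →L[ℝ] E) = H := by ext x; rfl
  rw [← hco, ContinuousLinearMap.inverse_equiv]
  exact eC.apply_symm_apply g

end Aux

set_option maxHeartbeats 1000000 in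
/-- in the damped Newton phase, an accepted backtracking stepsize
decreases the true objective by at least `γ'/2`. -/
theorem damped_newton_decrease {p : ℕ} (f : EuclideanSpace ℝ (Fin p) → ℝ)
    (m M κ₁ κ₂ η ζ γh γ' α : ℝ) (hm : 0 < m) (hmM : m ≤ M)
    (hκ₁ : κ₁ ∈ Set.Ioo (0 : ℝ) (1 / 2)) (hκ₂ : κ₂ ∈ Set.Ioo (0 : ℝ) 1)
    (hη : 0 < η) (hζpos : 0 < ζ)
    (hf : ContDiff ℝ 2 f)
    (hconv : ∀ θ' v : EuclideanSpace ℝ (Fin p), m * ‖v‖ ^ 2 ≤ ⟪hessianOf f θ' v, v⟫)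
    (hsmooth : ∀ θ' v : EuclideanSpace ℝ (Fin p), ⟪hessianOf f θ' v, v⟫ ≤ M * ‖v‖ ^ 2)
    (θ : EuclideanSpace ℝ (Fin p))
    (g : EuclideanSpace ℝ (Fin p))
    (H : EuclideanSpace ℝ (Fin p) →L[ℝ] EuclideanSpace ℝ (Fin p))
    (hgnorm : η / 2 ≤ ‖g‖) (hH : ‖H - hessianOf f θ‖ ≤ γh) (hγhm : γh ≤ m / 2)
    (Δ : EuclideanSpace ℝ (Fin p)) (hΔ : Δ = -(H.inverse g))
    (ftil : EuclideanSpace ℝ (Fin p) → ℝ)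
    (hftil₁ : |ftil θ - f θ| ≤ ζ / 4)
    (hftil₂ : |ftil (θ + α • Δ) - f (θ + α • Δ)| ≤ ζ / 4)
    (hα : κ₂ * (m / M) * (1 / 2 - κ₁) ≤ α)
    (hexit : ftil (θ + α • Δ) ≤ ftil θ + κ₁ * α * ⟪g, Δ⟫ + ζ)
    (hγ' : γ' = κ₁ * κ₂ * (m / M) * (1 / 2 - κ₁) * η ^ 2 / (4 * (M + γh)))
    (hζ : ζ ≤ γ' / 3) :
    f (θ + α • Δ) ≤ f θ - γ' / 2 := by
  obtain ⟨hκ₁0, hκ₁half⟩ := hκ₁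
  obtain ⟨hκ₂0, hκ₂1⟩ := hκ₂
  have hM : 0 < M := lt_of_lt_of_le hm hmM
  have hγ0 : 0 ≤ γh := le_trans (norm_nonneg _) hH
  have hMγ : 0 < M + γh := by linarith
  set A := hessianOf f θ with hA
  have hsymA : ∀ x y : EuclideanSpace ℝ (Fin p), ⟪A x, y⟫ = ⟪A y, x⟫ :=
    fun x y => hess_symm f hf θ x y
  -- H is coercive
  have hpos : ∀ v : EuclideanSpace ℝ (Fin p), (m - γh) * ‖v‖ ^ 2 ≤ ⟪H v, v⟫ := by
    intro v
    have hsplit : ⟪H v, v⟫ = ⟪A v, v⟫ + ⟪(H - A) v, v⟫ := by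
      rw [ContinuousLinearMap.sub_apply, inner_sub_left]
      ring
    have hHAv : ‖(H - A) v‖ ≤ γh * ‖v‖ :=
      le_trans ((H - A).le_opNorm v) (mul_le_mul_of_nonneg_right hH (norm_nonneg v))
    have habs : |⟪(H - A) v, v⟫| ≤ ‖(H - A) v‖ * ‖v‖ := abs_real_inner_le_norm _ v
    have hlow : -(γh * ‖v‖ ^ 2) ≤ ⟪(H - A) v, v⟫ := by
      have h1 : ‖(H - A) v‖ * ‖v‖ ≤ γh * ‖v‖ * ‖v‖ :=
        mul_le_mul_of_nonneg_right hHAv (norm_nonneg v)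
      have h2 := neg_abs_le ⟪(H - A) v, v⟫
      nlinarith [h1, h2, habs]
    have := hconv θ v
    rw [hsplit]
    nlinarith [this, hlow]
  have hmγ : (0:ℝ) < m - γh := by linarith
  set u : EuclideanSpace ℝ (Fin p) := H.inverse g with hu
  have hHu : H u = g := inverse_section H (m - γh) hmγ hpos g
  -- the Newton decrement bound
  have hkey := key_ineq_all A H m M γh hm hmM hγhm hsymA (hconv θ) (hsmooth θ) hH u
  rw [hHu] at hkey
  have hg2 : η ^ 2 / 4 ≤ ‖g‖ ^ 2 := by
    have h1 : (η / 2) ^ 2 ≤ ‖g‖ ^ 2 :=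
      pow_le_pow_left₀ (by positivity) hgnorm 2
    nlinarith [h1]
  have hlam : η ^ 2 / (4 * (M + γh)) ≤ ⟪g, u⟫ := by
    rw [div_le_iff₀ (by positivity)]
    linarith [hkey, hg2]
  have hlam0 : 0 ≤ ⟪g, u⟫ := le_trans (by positivity) hlam
  -- step size lower bound
  set β := κ₂ * (m / M) * (1 / 2 - κ₁) with hβ
  have hβpos : 0 < β := by
    have : 0 < m / M := by positivity
    have : 0 < 1 / 2 - κ₁ := by linarith
    rw [hβ]; positivity
  have hαpos : 0 < α := lt_of_lt_of_le hβpos hα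
  have hgd : ⟪g, Δ⟫ = -⟪g, u⟫ := by rw [hΔ, inner_neg_right]
  have hmain : κ₁ * α * ⟪g, Δ⟫ ≤ -γ' := by
    have i1 : β * (η ^ 2 / (4 * (M + γh))) ≤ α * ⟪g, u⟫ :=
      mul_le_mul hα hlam (by positivity) (le_of_lt hαpos)
    have i2 : κ₁ * (β * (η ^ 2 / (4 * (M + γh)))) ≤ κ₁ * (α * ⟪g, u⟫) :=
      mul_le_mul_of_nonneg_left i1 (le_of_lt hκ₁0)
    have hγeq : γ' = κ₁ * (β * (η ^ 2 / (4 * (M + γh)))) := by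
      rw [hγ', hβ]; ring
    rw [hgd]
    rw [hγeq]
    linarith [i2]
  have hb1 := abs_le.mp hftil₁
  have hb2 := abs_le.mp hftil₂
  linarith [hb1.1, hb1.2, hb2.1, hb2.2, hexit, hmain, hζ]
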